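/- Let H be a tree-based hierarchy with canonical aggregation matrix A, positive initial predictions ŷ, and top-heavy weight matrices W(M). Let c be an item that is a child in some constraint, say c ∈ C_k with parent p_k. Then lim_{M→∞} y_c(M) exists and is finite, and lim_{M→∞} λ_k(M)/M^{H(p_k)−1} = lim_{M→∞} (y_c(M)/ŷ_c) − 1. -/

import Mathlib

open Matrix Filter Topology

/-- A tree-based hierarchy in canonical form on items `Fin N` with `K` constraints.
Constraint `k` has parent item `parent k` and nonempty child set `children k`;
each item is a child in at most one constraint, and the height function satisfies
`H(c) = H(p_k) - 1` (equivalently `H(p_k) = H(c) + 1`) for every child `c` of `p_k`. -/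
structure TreeHierarchy (N K : ℕ) where
  parent : Fin K → Fin N
  children : Fin K → Finset (Fin N)
  children_nonempty : ∀ k, (children k).Nonempty
  parent_notMem : ∀ k, parent k ∉ children k
  child_unique : ∀ k j : Fin K, ∀ n : Fin N, n ∈ children k → n ∈ children j → k = j
  height : Fin N → ℕ
  height_child : ∀ k : Fin K, ∀ c ∈ children k, height (parent k) = height c + 1

variable {N K : ℕ}

/-- The canonical aggregation matrix of a tree-based hierarchy:
`A k (p_k) = 1`, `A k c = -1` for `c ∈ C_k`, and `0` otherwise. -/
noncomputable def aggMatrix (T : TreeHierarchy N K) : Matrix (Fin K) (Fin N) ℝ :=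
  fun k n => if n = T.parent k then 1 else if n ∈ T.children k then -1 else 0

/-- The top-heavy weight matrix: diagonal with entries `w_n(M) = M^(H n) / yhat n`. -/
noncomputable def topW (T : TreeHierarchy N K) (yhat : Fin N → ℝ) (M : ℝ) :
    Matrix (Fin N) (Fin N) ℝ :=
  Matrix.diagonal fun n => M ^ T.height n / yhat n

/-- `λ(M) = (A W(M)⁻¹ Aᵀ)⁻¹ A ŷ`. -/
noncomputable def lamTop (T : TreeHierarchy N K) (yhat : Fin N → ℝ) (M : ℝ) : Fin K → ℝ :=
  (aggMatrix T * (topW T yhat M)⁻¹ * (aggMatrix T)ᵀ)⁻¹.mulVec ((aggMatrix T).mulVec yhat)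

/-- `y(M) = ŷ - W(M)⁻¹ Aᵀ λ(M)`. -/
noncomputable def yTop (T : TreeHierarchy N K) (yhat : Fin N → ℝ) (M : ℝ) : Fin N → ℝ :=
  yhat - ((topW T yhat M)⁻¹ * (aggMatrix T)ᵀ).mulVec (lamTop T yhat M)

/-! ### Auxiliary lemmas -/

lemma agg_parent (T : TreeHierarchy N K) (k : Fin K) : aggMatrix T k (T.parent k) = 1 := by
  simp [aggMatrix]

lemma agg_child (T : TreeHierarchy N K) {k : Fin K} {n : Fin N} (hn : n ∈ T.children k) :
    aggMatrix T k n = -1 := by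
  have h1 : n ≠ T.parent k := by
    rintro rfl; exact T.parent_notMem k hn
  simp [aggMatrix, h1, hn]

lemma agg_zero (T : TreeHierarchy N K) {k : Fin K} {n : Fin N}
    (h1 : n ≠ T.parent k) (h2 : n ∉ T.children k) : aggMatrix T k n = 0 := by
  simp [aggMatrix, h1, h2]

lemma height_parent_pos (T : TreeHierarchy N K) (k : Fin K) :
    1 ≤ T.height (T.parent k) := by
  obtain ⟨c, hc⟩ := T.children_nonempty k
  rw [T.height_child k c hc]; omega

/-- The limiting matrix `C` with `C k k = ∑_{c ∈ C_k} ŷ_c`, `C k j = -ŷ_{p_k}` when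
`p_k ∈ C_j`, and `0` otherwise. -/
noncomputable def Cm (T : TreeHierarchy N K) (yhat : Fin N → ℝ) :
    Matrix (Fin K) (Fin K) ℝ :=
  fun k j => ∑ n, (if n ∈ T.children j then -(aggMatrix T k n * yhat n) else 0)

lemma Cm_diag (T : TreeHierarchy N K) (yhat : Fin N → ℝ) (k : Fin K) :
    Cm T yhat k k = ∑ n ∈ T.children k, yhat n := by
  rw [Cm, Finset.sum_ite_mem, Finset.univ_inter]
  refine Finset.sum_congr rfl fun n hn => ?_
  rw [agg_child T hn]; ring

lemma Cm_offdiag (T : TreeHierarchy N K) (yhat : Fin N → ℝ) {k j : Fin K}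
    (hkj : k ≠ j) (hle : T.height (T.parent j) ≤ T.height (T.parent k)) :
    Cm T yhat k j = 0 := by
  rw [Cm]
  refine Finset.sum_eq_zero fun n _ => ?_
  by_cases hn : n ∈ T.children j
  · rw [if_pos hn]
    have h1 : n ≠ T.parent k := by
      rintro rfl
      have := T.height_child j _ hn
      omega
    have h2 : n ∉ T.children k := fun h => hkj (T.child_unique k j n h hn)
    rw [agg_zero T h1 h2]; ring
  · rw [if_neg hn]

lemma Cm_det_ne_zero (T : TreeHierarchy N K) (yhat : Fin N → ℝ) (hy : ∀ n, 0 < yhat n) :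
    (Cm T yhat).det ≠ 0 := by
  intro hdet
  obtain ⟨v, hv, hmv⟩ := Matrix.exists_mulVec_eq_zero_iff.mpr hdet
  obtain ⟨i, hi⟩ := Function.ne_iff.mp hv
  have hi' : v i ≠ 0 := hi
  classical
  set s : Finset (Fin K) := Finset.univ.filter (fun k => v k ≠ 0) with hs
  have hsne : s.Nonempty := ⟨i, by simp [hs, hi']⟩
  obtain ⟨k, hks, hmax⟩ := s.exists_max_image (fun k => T.height (T.parent k)) hsne
  have hvk : v k ≠ 0 := (Finset.mem_filter.mp hks).2
  have h0 : (Cm T yhat).mulVec v k = 0 := congrFun hmv k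
  rw [Matrix.mulVec, dotProduct] at h0
  have h1 : ∑ j, Cm T yhat k j * v j = Cm T yhat k k * v k := by
    refine Finset.sum_eq_single k (fun j _ hjk => ?_) (fun h => absurd (Finset.mem_univ k) h)
    by_cases hvj : v j = 0
    · rw [hvj, mul_zero]
    · have hjs : j ∈ s := by simp [hs, hvj]
      rw [Cm_offdiag T yhat (Ne.symm hjk) (hmax j hjs), zero_mul]
  have hCkk : 0 < Cm T yhat k k := by
    rw [Cm_diag]
    exact Finset.sum_pos (fun n _ => hy n) (T.children_nonempty k)
  rw [h1] at h0
  exact hvk (by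
    rcases mul_eq_zero.mp h0 with h | h
    · exact absurd h (ne_of_gt hCkk)
    · exact h)

lemma diagonal_inv' {m : Type*} [Fintype m] [DecidableEq m] (d : m → ℝ)
    (hd : ∀ i, d i ≠ 0) :
    (Matrix.diagonal d)⁻¹ = Matrix.diagonal (fun i => (d i)⁻¹) := by
  apply Matrix.inv_eq_right_inv
  rw [Matrix.diagonal_mul_diagonal]
  have h1 : (fun i => d i * (d i)⁻¹) = fun _ => (1 : ℝ) :=
    funext fun i => mul_inv_cancel₀ (hd i)
  rw [h1, Matrix.diagonal_one]

lemma tripleEntry (B : Matrix (Fin K) (Fin N) ℝ) (d : Fin N → ℝ) (k i : Fin K) :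
    (B * Matrix.diagonal d * Bᵀ) k i = ∑ n, B k n * d n * B i n := by
  rw [Matrix.mul_apply]
  exact Finset.sum_congr rfl fun n _ => by
    rw [Matrix.mul_diagonal, Matrix.transpose_apply]

lemma topW_inv (T : TreeHierarchy N K) (yhat : Fin N → ℝ) (hy : ∀ n, 0 < yhat n)
    {M : ℝ} (hM : M ≠ 0) :
    (topW T yhat M)⁻¹ = Matrix.diagonal fun n => yhat n / M ^ T.height n := by
  rw [topW, diagonal_inv' _ (fun n => div_ne_zero (pow_ne_zero _ hM) (ne_of_gt (hy n)))]
  have h1 : (fun n => (M ^ T.height n / yhat n)⁻¹) =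
      fun n => yhat n / M ^ T.height n := funext fun n => inv_div _ _
  rw [h1]

/-- Key convergence lemma: `λ_j(M) / M^(h_j - 1)` converges to the `j`-th coordinate of
`C⁻¹ (A ŷ)`. -/
lemma mu_tendsto (T : TreeHierarchy N K) (yhat : Fin N → ℝ) (hy : ∀ n, 0 < yhat n)
    (hinv : ∀ M : ℝ, 0 < M →
      IsUnit (aggMatrix T * (topW T yhat M)⁻¹ * (aggMatrix T)ᵀ).det)
    (j : Fin K) :
    Tendsto (fun M : ℝ => lamTop T yhat M j / M ^ (T.height (T.parent j) - 1)) atTop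
      (𝓝 ((Cm T yhat)⁻¹.mulVec ((aggMatrix T).mulVec yhat) j)) := by
  classical
  set G : ℝ → Matrix (Fin K) (Fin K) ℝ := fun M =>
    aggMatrix T * (topW T yhat M)⁻¹ * (aggMatrix T)ᵀ * Matrix.diagonal
      (fun i : Fin K => M ^ (T.height (T.parent i) - 1)) with hG
  -- entrywise convergence of G to Cm
  have hGt : Tendsto G atTop (𝓝 (Cm T yhat)) := by
    refine tendsto_pi_nhds.mpr ?_
    intro k
    rw [tendsto_pi_nhds]
    intro i
    have hkey : ∀ M : ℝ, 0 < M → G M k i =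
        ∑ n, aggMatrix T k n * (yhat n / M ^ T.height n) *
          (aggMatrix T i n * M ^ (T.height (T.parent i) - 1)) := by
      intro M hM
      rw [hG]
      simp only [Matrix.mul_diagonal]
      rw [topW_inv T yhat hy hM.ne', tripleEntry, Finset.sum_mul]
      exact Finset.sum_congr rfl fun n _ => by ring
    have hev : (fun M : ℝ => ∑ n, aggMatrix T k n * (yhat n / M ^ T.height n) *
        (aggMatrix T i n * M ^ (T.height (T.parent i) - 1))) =ᶠ[atTop]
        fun M => G M k i := by
      filter_upwards [eventually_gt_atTop 0] with M hM
      exact (hkey M hM).symm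
    refine Tendsto.congr' hev ?_
    show Tendsto _ atTop
      (𝓝 (∑ n, (if n ∈ T.children i then -(aggMatrix T k n * yhat n) else 0)))
    refine tendsto_finset_sum _ fun n _ => ?_
    by_cases hn : n ∈ T.children i
    · rw [if_pos hn]
      refine Tendsto.congr' ?_ tendsto_const_nhds
      filter_upwards [eventually_gt_atTop 0] with M hM
      have hHn : T.height (T.parent i) - 1 = T.height n := by
        have := T.height_child i n hn; omega
      rw [agg_child T hn, hHn]
      have hMn : (M : ℝ) ^ T.height n ≠ 0 := pow_ne_zero _ hM.ne'
      field_simp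
      all_goals ring
    · by_cases hp : n = T.parent i
      · rw [if_neg hn]
        have h1 : Tendsto (fun M : ℝ => aggMatrix T k n * yhat n * M⁻¹) atTop
            (𝓝 (aggMatrix T k n * yhat n * 0)) := tendsto_inv_atTop_zero.const_mul _
        rw [mul_zero] at h1
        refine Tendsto.congr' ?_ h1
        filter_upwards [eventually_gt_atTop 0] with M hM
        subst hp
        rw [agg_parent T i]
        have h2 : T.height (T.parent i) = (T.height (T.parent i) - 1) + 1 := by
          have := height_parent_pos T i; omega
        rw [h2, pow_succ]
        have hMn : (M : ℝ) ^ (T.height (T.parent i) - 1) ≠ 0 := pow_ne_zero _ hM.ne'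
        field_simp
        all_goals ring
        all_goals rw [Nat.add_sub_cancel_left]
      · rw [if_neg hn]
        rw [agg_zero T hp hn]
        simp only [zero_mul, mul_zero]
        exact tendsto_const_nhds
  have hCdet : (Cm T yhat).det ≠ 0 := Cm_det_ne_zero T yhat hy
  have hGdet : Tendsto (fun M => (G M).det) atTop (𝓝 (Cm T yhat).det) :=
    ((Continuous.matrix_det continuous_id).tendsto _).comp hGt
  have hGadj : Tendsto (fun M => (G M).adjugate) atTop (𝓝 (Cm T yhat).adjugate) :=
    ((Continuous.matrix_adjugate continuous_id).tendsto _).comp hGt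
  have hinv_entry : ∀ X : Matrix (Fin K) (Fin K) ℝ, ∀ a b,
      X⁻¹ a b = (X.det)⁻¹ * X.adjugate a b := by
    intro X a b
    rw [Matrix.inv_def, Ring.inverse_eq_inv']
    simp [Matrix.smul_apply]
  have hGinv : ∀ a b : Fin K, Tendsto (fun M => (G M)⁻¹ a b) atTop
      (𝓝 ((Cm T yhat)⁻¹ a b)) := by
    intro a b
    have hdetinv : Tendsto (fun M => ((G M).det)⁻¹) atTop (𝓝 ((Cm T yhat).det)⁻¹) :=
      hGdet.inv₀ hCdet
    have hadj : Tendsto (fun M => (G M).adjugate a b) atTop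
        (𝓝 ((Cm T yhat).adjugate a b)) := by
      have h1 := tendsto_pi_nhds.mp hGadj a
      exact tendsto_pi_nhds.mp h1 b
    simp only [hinv_entry]
    exact hdetinv.mul hadj
  have hmu : Tendsto (fun M => ((G M)⁻¹).mulVec ((aggMatrix T).mulVec yhat) j) atTop
      (𝓝 ((Cm T yhat)⁻¹.mulVec ((aggMatrix T).mulVec yhat) j)) := by
    simp only [Matrix.mulVec, dotProduct]
    exact tendsto_finset_sum _ fun i _ => (hGinv j i).mul_const _
  refine Tendsto.congr' ?_ hmu
  filter_upwards [eventually_gt_atTop 0] with M hM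
  -- for M > 0 : (G M)⁻¹.mulVec v j = lamTop j / M ^ (h j - 1)
  have hDi : (Matrix.diagonal (fun i : Fin K => M ^ (T.height (T.parent i) - 1)))⁻¹ =
      Matrix.diagonal (fun i : Fin K => (M ^ (T.height (T.parent i) - 1))⁻¹) :=
    diagonal_inv' _ (fun i => pow_ne_zero _ hM.ne')
  rw [hG]
  simp only []
  rw [Matrix.mul_inv_rev, hDi, ← Matrix.mulVec_mulVec]
  have hlam : (aggMatrix T * (topW T yhat M)⁻¹ * (aggMatrix T)ᵀ)⁻¹.mulVec
      ((aggMatrix T).mulVec yhat) = lamTop T yhat M := rfl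
  rw [hlam, Matrix.mulVec_diagonal, inv_mul_eq_div]

/-- With top-heavy weights, if `c ∈ C_k` is a child item with parent `p_k`,
then `y_c(M)` converges to a finite limit `L` as `M → ∞`, and
`λ_k(M) / M^(H(p_k) - 1) → L / ŷ_c - 1`, i.e. the two limits in
`lim λ_k/M^(H(p_k)-1) = lim (y_c/ŷ_c) - 1` agree. -/
theorem child_limit (T : TreeHierarchy N K) (yhat : Fin N → ℝ)
    (hy : ∀ n, 0 < yhat n)
    (hinv : ∀ M : ℝ, 0 < M →
      IsUnit (aggMatrix T * (topW T yhat M)⁻¹ * (aggMatrix T)ᵀ).det)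
    (c : Fin N) (k : Fin K) (hc : c ∈ T.children k) :
    ∃ L : ℝ, Tendsto (fun M : ℝ => yTop T yhat M c) atTop (𝓝 L) ∧
      Tendsto (fun M : ℝ => lamTop T yhat M k / M ^ (T.height (T.parent k) - 1))
        atTop (𝓝 (L / yhat c - 1)) := by
  classical
  set u : Fin K → ℝ := (Cm T yhat)⁻¹.mulVec ((aggMatrix T).mulVec yhat) with hu
  have hmu : ∀ j : Fin K,
      Tendsto (fun M : ℝ => lamTop T yhat M j / M ^ (T.height (T.parent j) - 1)) atTop
        (𝓝 (u j)) := fun j => mu_tendsto T yhat hy hinv j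
  have hyc : yhat c ≠ 0 := ne_of_gt (hy c)
  refine ⟨yhat c * (1 + u k), ?_, ?_⟩
  · -- convergence of y_c
    have hHc : T.height c = T.height (T.parent k) - 1 := by
      have := T.height_child k c hc; omega
    -- per-constraint term convergence
    have hterm : ∀ j : Fin K, Tendsto (fun M : ℝ =>
        (yhat c / M ^ T.height c) * (aggMatrix T j c * lamTop T yhat M j)) atTop
        (𝓝 (if j = k then -(yhat c * u k) else 0)) := by
      intro j
      by_cases hcj : c ∈ T.children j
      · have hjk : j = k := T.child_unique j k c hcj hc
        subst hjk
        rw [if_pos rfl]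
        have base : Tendsto (fun M : ℝ =>
            -(yhat c * (lamTop T yhat M j / M ^ (T.height (T.parent j) - 1)))) atTop
            (𝓝 (-(yhat c * u j))) := ((hmu j).const_mul (yhat c)).neg
        refine Tendsto.congr' ?_ base
        filter_upwards [eventually_gt_atTop 0] with M hM
        rw [agg_child T hcj, hHc]
        ring
      · have hjk : j ≠ k := by rintro rfl; exact hcj hc
        rw [if_neg hjk]
        by_cases hpj : c = T.parent j
        · have e1 : T.height (T.parent j) = T.height c := by rw [← hpj]
          have e2 : T.height c = (T.height (T.parent j) - 1) + 1 := by
            have := height_parent_pos T j; omega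
          have base : Tendsto (fun M : ℝ =>
              yhat c * (lamTop T yhat M j / M ^ (T.height (T.parent j) - 1)) * M⁻¹) atTop
              (𝓝 (yhat c * u j * 0)) := ((hmu j).const_mul (yhat c)).mul tendsto_inv_atTop_zero
          rw [mul_zero] at base
          refine Tendsto.congr' ?_ base
          filter_upwards [eventually_gt_atTop 0] with M hM
          have hAc : aggMatrix T j c = 1 := by rw [hpj]; exact agg_parent T j
          rw [hAc, e2, pow_succ]
          have hMn : (M : ℝ) ^ (T.height (T.parent j) - 1) ≠ 0 := pow_ne_zero _ hM.ne'
          field_simp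
          all_goals ring
        · have hAc : aggMatrix T j c = 0 := agg_zero T hpj hcj
          simp only [hAc, zero_mul, mul_zero]
          exact tendsto_const_nhds
    have hsum : Tendsto (fun M : ℝ =>
        ∑ j, (yhat c / M ^ T.height c) * (aggMatrix T j c * lamTop T yhat M j)) atTop
        (𝓝 (∑ j, if j = k then -(yhat c * u k) else 0)) :=
      tendsto_finset_sum _ fun j _ => hterm j
    have hsumval : (∑ j, if j = k then -(yhat c * u k) else 0) = -(yhat c * u k) := by
      simp
    rw [hsumval] at hsum
    have htotal : Tendsto (fun M : ℝ => yhat c -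
        ∑ j, (yhat c / M ^ T.height c) * (aggMatrix T j c * lamTop T yhat M j)) atTop
        (𝓝 (yhat c - -(yhat c * u k))) := hsum.const_sub _
    have hval : yhat c - -(yhat c * u k) = yhat c * (1 + u k) := by ring
    rw [hval] at htotal
    refine Tendsto.congr' ?_ htotal
    filter_upwards [eventually_gt_atTop 0] with M hM
    rw [yTop, Pi.sub_apply]
    congr 1
    have hentry : ∀ j : Fin K, ((topW T yhat M)⁻¹ * (aggMatrix T)ᵀ) c j =
        (yhat c / M ^ T.height c) * aggMatrix T j c := by
      intro j
      rw [topW_inv T yhat hy hM.ne', Matrix.diagonal_mul, Matrix.transpose_apply]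
    simp only [Matrix.mulVec, dotProduct, hentry]
    refine Finset.sum_congr rfl fun j _ => ?_
    ring
  · have h2 := hmu k
    have h3 : yhat c * (1 + u k) / yhat c - 1 = u k := by
      field_simp
      ring
    rw [h3]
    exact h2
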